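/- arXiv:2405.04144 — 3 statements merged into one kernel-verified Lean document; each statement's English description precedes it below -/
import Mathlib

section
/- Let S ~ Bern(a) and S₁ ~ Bern(p₁) be independent with a, p₁ ≤ 1/2, and let X = S ⊕ S₁ (so X ~ Bern(b) with b = (a−p₁)/(1−2p₁), taking b ≤ 1/2 WLOG). For any random variable X̂ such that S − X − X̂ forms a Markov chain, H(S|X̂) ≥ H(p₁), where H is the binary entropy function. -/
open Finset

/-- Binary entropy function (base 2). -/
noncomputable def binEnt (p : ℝ) : ℝ :=
  -(p * Real.logb 2 p) - (1 - p) * Real.logb 2 (1 - p)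

/-- Bernoulli pmf with parameter `p`. -/
noncomputable def bern (p : ℝ) : Bool → ℝ := fun b => if b then p else 1 - p

/-- Conditional (Shannon) entropy `H(B | A)` (base 2) of a joint pmf `p : B → A → ℝ`. -/
noncomputable def condEnt2 {β α : Type*} [Fintype β] [Fintype α] (p : β → α → ℝ) : ℝ :=
  ∑ a : α, ∑ b : β, -(p b a * Real.logb 2 (p b a / ∑ b' : β, p b' a))

private lemma gibbs_term (q N Ps P : ℝ) (hq : 0 ≤ q) (hqN : q ≤ N) (hqPs : q ≤ Ps)
    (hPsP : Ps ≤ P) (hN0 : 0 ≤ N) (hPs0 : 0 ≤ Ps) :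
    q * (Real.logb 2 (Ps / P) - Real.logb 2 (q / N)) ≤ (Ps * N / P - q) / Real.log 2 := by
  have hlog2 : 0 < Real.log 2 := Real.log_pos one_lt_two
  rcases eq_or_lt_of_le hq with h | h
  · rcases eq_or_lt_of_le (hPs0.trans hPsP) with hP | hP
    · simp [← h, ← hP]
    · rw [← h]
      simp only [zero_mul, sub_zero]
      positivity
  · have hN : 0 < N := lt_of_lt_of_le h hqN
    have hPs : 0 < Ps := lt_of_lt_of_le h hqPs
    have hP : 0 < P := lt_of_lt_of_le hPs hPsP
    have hz : (0:ℝ) < Ps * N / (P * q) := by positivity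
    have hd : Real.logb 2 (Ps / P) - Real.logb 2 (q / N)
        = Real.log (Ps * N / (P * q)) / Real.log 2 := by
      rw [Real.logb, Real.logb, ← sub_div,
        Real.log_div hPs.ne' hP.ne', Real.log_div h.ne' hN.ne',
        Real.log_div (by positivity) (by positivity),
        Real.log_mul hPs.ne' hN.ne', Real.log_mul hP.ne' h.ne']
      ring
    rw [hd]
    have hle := Real.log_le_sub_one_of_pos hz
    have h1 : q * (Real.log (Ps * N / (P * q)) / Real.log 2)
        ≤ q * ((Ps * N / (P * q) - 1) / Real.log 2) := by
      apply mul_le_mul_of_nonneg_left _ hq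
      gcongr
    refine h1.trans (le_of_eq ?_)
    have hqz : q * (Ps * N / (P * q)) = Ps * N / P := by
      field_simp
    rw [mul_div_assoc'] at *
    rw [div_eq_div_iff hlog2.ne' hlog2.ne']
    field_simp

private lemma condEnt_step (Q : Bool → Bool → ℝ) (hQ : ∀ s x, 0 ≤ Q s x) :
    ∑ x : Bool, ∑ s : Bool, -(Q s x * Real.logb 2 (Q s x / ∑ s' : Bool, Q s' x))
      ≤ ∑ s : Bool, -((∑ x : Bool, Q s x) *
          Real.logb 2 ((∑ x : Bool, Q s x) / ∑ s' : Bool, ∑ x : Bool, Q s' x)) := by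
  set P : ℝ := ∑ s' : Bool, ∑ x : Bool, Q s' x with hP
  set N : Bool → ℝ := fun x => ∑ s' : Bool, Q s' x with hN
  set Ps : Bool → ℝ := fun s => ∑ x' : Bool, Q s x' with hPs
  have hN0 : ∀ x, 0 ≤ N x := fun x => Finset.sum_nonneg fun j _ => hQ j x
  have hPs0 : ∀ s, 0 ≤ Ps s := fun s => Finset.sum_nonneg fun j _ => hQ s j
  have hqN : ∀ s x, Q s x ≤ N x := fun s x =>
    Finset.single_le_sum (f := fun s' => Q s' x) (fun i _ => hQ i x) (Finset.mem_univ s)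
  have hqPs : ∀ s x, Q s x ≤ Ps s := fun s x =>
    Finset.single_le_sum (f := fun x' => Q s x') (fun i _ => hQ s i) (Finset.mem_univ x)
  have hPsP : ∀ s, Ps s ≤ P :=
    fun s => Finset.single_le_sum (f := fun s' => Ps s') (fun i _ => hPs0 i) (Finset.mem_univ s)
  have hlog2 : 0 < Real.log 2 := Real.log_pos one_lt_two
  have main : ∀ x s, -(Q s x * Real.logb 2 (Q s x / N x))
      ≤ -(Q s x * Real.logb 2 (Ps s / P)) + (Ps s * N x / P - Q s x) / Real.log 2 := by
    intro x s
    have hg := gibbs_term (Q s x) (N x) (Ps s) P (hQ s x) (hqN s x) (hqPs s x)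
      (hPsP s) (hN0 x) (hPs0 s)
    have hr : Q s x * (Real.logb 2 (Ps s / P) - Real.logb 2 (Q s x / N x))
        = Q s x * Real.logb 2 (Ps s / P) - Q s x * Real.logb 2 (Q s x / N x) := by ring
    linarith [hg, hr.symm.le]
  have sum_zero : ∑ x : Bool, ∑ s : Bool, (Ps s * N x / P - Q s x) = 0 := by
    rcases eq_or_ne P 0 with h0 | h0
    · have hz : ∀ s x, Q s x = 0 := by
        have hPe : Q true true + Q true false + (Q false true + Q false false) = 0 := by
          have := h0
          simp only [hP, hPs, Fintype.sum_bool] at this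
          linarith
        intro s x
        have h1 := hQ true true; have h2 := hQ true false
        have h3 := hQ false true; have h4 := hQ false false
        cases s <;> cases x <;> linarith
      simp only [hPs, hN, Fintype.sum_bool, hz, h0]
      norm_num
    · simp only [hPs, hN, hP, Fintype.sum_bool] at *
      field_simp
      ring
  have step : ∑ x : Bool, ∑ s : Bool, -(Q s x * Real.logb 2 (Q s x / N x))
      ≤ ∑ x : Bool, ∑ s : Bool,
        (-(Q s x * Real.logb 2 (Ps s / P)) + (Ps s * N x / P - Q s x) / Real.log 2) := by
    apply Finset.sum_le_sum; intro x _
    apply Finset.sum_le_sum; intro s _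
    exact main x s
  refine step.trans (le_of_eq ?_)
  have expand : ∑ x : Bool, ∑ s : Bool,
        (-(Q s x * Real.logb 2 (Ps s / P)) + (Ps s * N x / P - Q s x) / Real.log 2)
      = (∑ x : Bool, ∑ s : Bool, -(Q s x * Real.logb 2 (Ps s / P)))
        + (∑ x : Bool, ∑ s : Bool, (Ps s * N x / P - Q s x)) / Real.log 2 := by
    simp only [Fintype.sum_bool]
    ring
  rw [expand, sum_zero, zero_div, add_zero, Finset.sum_comm]
  apply Finset.sum_congr rfl
  intro s _
  simp only [hPs, Fintype.sum_bool]
  ring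

/-- For the binary symmetric source `S ~ Bern(a)`, `S₁ ~ Bern(p₁)` with
`X = S ⊕ S₁`, so that `X ~ Bern(b)` with `b = (a - p₁)/(1 - 2p₁)` and
`P(S = s, X = x) = bern b x * bern p₁ (s ⊕ x)`, any `X̂` forming the Markov chain
`S - X - X̂` satisfies `H(S | X̂) ≥ H(p₁)`, where `q` is the joint pmf of `(S, X, X̂)`. -/
theorem stmt0 {α : Type*} [Fintype α] (a p₁ : ℝ)
    (ha0 : 0 ≤ a) (ha : a ≤ 1 / 2) (hp0 : 0 ≤ p₁) (hp : p₁ ≤ 1 / 2)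
    (q : Bool → Bool → α → ℝ)
    (hq0 : ∀ s x xh, 0 ≤ q s x xh)
    -- joint of (S, X):  `S ~ Bern(a)`, `X ~ Bern(b)`, `S = X ⊕ S₁` with `S₁ ~ Bern(p₁)`
    (hSX : ∀ s x, ∑ xh : α, q s x xh
        = bern ((a - p₁) / (1 - 2 * p₁)) x * bern p₁ (Bool.xor s x))
    -- Markov chain S - X - X̂
    (hmarkov : ∀ s x xh,
        q s x xh * (∑ s' : Bool, ∑ xh' : α, q s' x xh')
          = (∑ xh' : α, q s x xh') * (∑ s' : Bool, q s' x xh)) :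
    binEnt p₁ ≤ condEnt2 (fun s xh => ∑ x : Bool, q s x xh) := by
  set b : ℝ := (a - p₁) / (1 - 2 * p₁) with hb
  -- the conditional distribution of S given (X, X̂) is Bern(p₁) shifted
  have hT : ∀ x : Bool, ∑ s' : Bool, ∑ xh' : α, q s' x xh' = bern b x := by
    intro x
    rw [Fintype.sum_bool, hSX, hSX]
    cases x <;> simp [bern] <;> ring
  have hkey : ∀ s x xh, q s x xh = bern p₁ (Bool.xor s x) * ∑ s' : Bool, q s' x xh := by
    intro s x xh
    have hm := hmarkov s x xh
    rw [hT, hSX] at hm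
    rcases eq_or_ne (bern b x) 0 with h0 | h0
    · have hM : ∑ xh' : α, q s x xh' = 0 := by rw [hSX, h0, zero_mul]
      have hq' : ∀ s', q s' x xh = 0 := by
        intro s'
        have hM' : ∑ xh' : α, q s' x xh' = 0 := by rw [hSX, h0, zero_mul]
        have := (Finset.sum_eq_zero_iff_of_nonneg (fun i _ => hq0 s' x i)).mp hM' xh
          (Finset.mem_univ xh)
        exact this
      rw [hq' s, Fintype.sum_bool, hq' true, hq' false]
      ring
    · have : q s x xh * bern b x = bern b x * (bern p₁ (Bool.xor s x) * ∑ s' : Bool, q s' x xh) := by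
        rw [hm]; ring
      exact mul_left_cancel₀ h0 (by linarith [this] )
  -- per-(x, x̂) conditional entropy of S equals N * binEnt p₁
  have step2 : ∀ (x : Bool) (xh : α),
      ∑ s : Bool, -(q s x xh * Real.logb 2 (q s x xh / ∑ s' : Bool, q s' x xh))
        = (∑ s' : Bool, q s' x xh) * binEnt p₁ := by
    intro x xh
    set Nv : ℝ := ∑ s' : Bool, q s' x xh with hNv
    rcases eq_or_ne Nv 0 with h0 | h0
    · have hz : ∀ s, q s x xh = 0 := by
        intro s; rw [hkey s x xh, ← hNv, h0, mul_zero]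
      rw [Fintype.sum_bool, hz, hz, h0]
      norm_num
    · have hdiv : ∀ s : Bool, q s x xh / Nv = bern p₁ (Bool.xor s x) := by
        intro s; rw [hkey s x xh, ← hNv, mul_div_assoc, div_self h0, mul_one]
      rw [Fintype.sum_bool, hdiv, hdiv, hkey true x xh, hkey false x xh, ← hNv]
      cases x <;> simp [bern, binEnt] <;> ring
  -- the total mass is 1
  have total : ∑ xh : α, ∑ x : Bool, ∑ s' : Bool, q s' x xh = 1 := by
    have swap : ∑ xh : α, ∑ x : Bool, ∑ s' : Bool, q s' x xh
        = ∑ x : Bool, ∑ s' : Bool, ∑ xh : α, q s' x xh := by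
      rw [Finset.sum_comm]
      exact Finset.sum_congr rfl fun x _ => Finset.sum_comm
    rw [swap]
    simp only [hSX, Fintype.sum_bool]
    simp [bern]
    ring
  have h1 : ∑ xh : α, ∑ x : Bool, ∑ s : Bool,
      -(q s x xh * Real.logb 2 (q s x xh / ∑ s' : Bool, q s' x xh)) = binEnt p₁ := by
    calc ∑ xh : α, ∑ x : Bool, ∑ s : Bool,
          -(q s x xh * Real.logb 2 (q s x xh / ∑ s' : Bool, q s' x xh))
        = ∑ xh : α, ∑ x : Bool, (∑ s' : Bool, q s' x xh) * binEnt p₁ :=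
          Finset.sum_congr rfl fun xh _ => Finset.sum_congr rfl fun x _ => step2 x xh
      _ = (∑ xh : α, ∑ x : Bool, ∑ s' : Bool, q s' x xh) * binEnt p₁ := by
          rw [Finset.sum_mul]
          exact Finset.sum_congr rfl fun xh _ => (Finset.sum_mul _ _ _).symm
      _ = binEnt p₁ := by rw [total, one_mul]
  rw [← h1]
  simp only [condEnt2]
  apply Finset.sum_le_sum
  intro xh _
  exact condEnt_step (fun s x => q s x xh) (fun s x => hq0 s x xh)
end

section
/- Let S ~ Bern(a), S₁ ~ Bern(p₁) independent with a, p₁ ≤ 1/2, X = S ⊕ S₁, b = min{(a−p₁)/(1−2p₁), 1−(a−p₁)/(1−2p₁)}. For C with H(p₁) ≤ C, define C₁ = (H⁻¹(C)−p₁)/(1−2p₁), where H⁻¹: [0,1] → [0,1/2] is the inverse of binary entropy. Then the infimum of I(X; X̂) over all conditional distributions p(X̂|X) satisfying E[𝟙{X ≠ X̂}] ≤ D and H(S|X̂) ≤ C equals: H(b) − H(C₁) if D ≥ C₁ and C₁ ≤ b; H(b) − H(D) if D < C₁ and D ≤ b; and 0 if min{D, C₁} > b. -/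
open Finset

/-- Mutual information `I(X; X̂)` (base 2) of a joint pmf on `Bool × Bool`. -/
noncomputable def mi2 (p : Bool → Bool → ℝ) : ℝ :=
  ∑ x : Bool, ∑ y : Bool,
    p x y * Real.logb 2 (p x y / ((∑ y' : Bool, p x y') * ∑ x' : Bool, p x' y))

namespace RDC
open Real Set


open Real

lemma binEnt_eq (p : ℝ) : binEnt p = Real.binEntropy p / Real.log 2 := by
  unfold binEnt Real.binEntropy Real.logb
  rw [Real.log_inv, Real.log_inv]
  ring

lemma binEnt_one_sub (p : ℝ) : binEnt (1 - p) = binEnt p := by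
  rw [binEnt_eq, binEnt_eq, Real.binEntropy_one_sub]

lemma binEnt_nonneg {p : ℝ} (h0 : 0 ≤ p) (h1 : p ≤ 1) : 0 ≤ binEnt p := by
  rw [binEnt_eq]
  exact div_nonneg (Real.binEntropy_nonneg h0 h1) (Real.log_nonneg one_le_two)

lemma binEnt_strictMonoOn : StrictMonoOn binEnt (Set.Icc 0 (1/2)) := by
  intro x hx y hy hxy
  rw [binEnt_eq, binEnt_eq]
  have h2 : ((2:ℝ)⁻¹ : ℝ) = 1/2 := by norm_num
  have := Real.binEntropy_strictMonoOn (a := x) (b := y)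
    ⟨hx.1, by rw [h2]; exact hx.2⟩ ⟨hy.1, by rw [h2]; exact hy.2⟩ hxy
  exact div_lt_div_of_pos_right this (Real.log_pos one_lt_two)

lemma binEnt_mono {x y : ℝ} (h0 : 0 ≤ x) (hxy : x ≤ y) (hy : y ≤ 1/2) :
    binEnt x ≤ binEnt y :=
  binEnt_strictMonoOn.monotoneOn ⟨h0, by linarith⟩ ⟨by linarith, hy⟩ hxy

lemma binEnt_le_iff {x y : ℝ} (hx : 0 ≤ x) (hx2 : x ≤ 1/2) (hy : 0 ≤ y) (hy2 : y ≤ 1/2) :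
    binEnt x ≤ binEnt y ↔ x ≤ y :=
  binEnt_strictMonoOn.le_iff_le ⟨hx, hx2⟩ ⟨hy, hy2⟩



open Real Set

lemma logA {u : ℝ} (hu : 1 ≤ u) : 2*(u-1) ≤ (u+1) * Real.log u := by
  have key : MonotoneOn (fun u : ℝ => (u+1) * Real.log u - 2*(u-1)) (Set.Ici 1) := by
    apply monotoneOn_of_hasDerivWithinAt_nonneg (convex_Ici 1)
      (f' := fun u => (1 * Real.log u + (u+1) * u⁻¹) - 2*1)
    · intro x hx
      have hx0 : (0:ℝ) < x := lt_of_lt_of_le one_pos hx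
      exact (((continuousAt_id.add continuousAt_const).mul
        (Real.continuousAt_log hx0.ne')).sub
        (continuousAt_const.mul (continuousAt_id.sub continuousAt_const))).continuousWithinAt
    · intro x hx
      rw [interior_Ici] at hx
      have hx0 : (0:ℝ) < x := lt_trans one_pos hx
      exact ((((hasDerivAt_id x).add_const 1).mul (Real.hasDerivAt_log hx0.ne')).sub
        (((hasDerivAt_id x).sub_const 1).const_mul 2)).hasDerivWithinAt
    · intro x hx
      rw [interior_Ici] at hx
      have hx0 : (0:ℝ) < x := lt_trans one_pos hx
      have hlog : 1 - x⁻¹ ≤ Real.log x := by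
        have h := Real.log_le_sub_one_of_pos (inv_pos.2 hx0)
        rw [Real.log_inv] at h; linarith
      have h4 : (x+1) * x⁻¹ = 1 + x⁻¹ := by field_simp
      rw [h4]; linarith
  have h := key (self_mem_Ici) (mem_Ici.2 hu) hu
  simp only [Real.log_one] at h
  linarith

lemma logB {u : ℝ} (hu : 1 ≤ u) : u^2 - 1 ≤ (u^2+1) * Real.log u := by
  have hA := logA hu
  have h1 : (u^2+1)*(2*(u-1)) ≤ (u^2+1)*((u+1)*Real.log u) :=
    mul_le_mul_of_nonneg_left hA (by positivity)
  have h3 : (u-1)^3 ≤ (u+1) * ((u^2+1)*Real.log u - (u^2-1)) := by nlinarith [h1]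
  have h2 : (0:ℝ) ≤ (u-1)^3 := pow_nonneg (by linarith) 3
  nlinarith [h3, h2]

lemma logC {t : ℝ} (ht0 : 0 < t) (ht : t < 1/2) :
    1 - 2*t ≤ (2*t^2 - 2*t + 1) * (Real.log (1-t) - Real.log t) := by
  have h1t : (0:ℝ) < 1 - t := by linarith
  have hu : 1 ≤ (1-t)/t := by rw [le_div_iff₀ ht0]; linarith
  have hB := logB hu
  rw [Real.log_div h1t.ne' ht0.ne'] at hB
  have hu2 : ((1-t)/t)^2 * t^2 = (1-t)^2 := by field_simp
  have h2 := mul_le_mul_of_nonneg_right hB (le_of_lt (by positivity : (0:ℝ) < t^2))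
  have hu2A : ((1-t)/t)^2 * t^2 * (Real.log (1-t) - Real.log t)
      = (1-t)^2 * (Real.log (1-t) - Real.log t) := by rw [hu2]
  nlinarith [h2, hu2, hu2A]


open Real Set

lemma a_pos {t : ℝ} (ht0 : 0 < t) (ht : t < 1/2) :
    0 < Real.log (1-t) - Real.log t :=
  sub_pos.2 (Real.log_lt_log ht0 (by linarith))

lemma hasDerivAt_a {t : ℝ} (ht0 : 0 < t) (ht1 : t < 1) :
    HasDerivAt (fun t : ℝ => Real.log (1-t) - Real.log t)
      ((1-t)⁻¹ * (-1) - t⁻¹) t := by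
  have h1 : HasDerivAt (fun t : ℝ => 1 - t) (-1) t := by
    simpa using (hasDerivAt_id t).const_sub 1
  have h2 : HasDerivAt (fun t : ℝ => Real.log (1-t)) ((1-t)⁻¹ * (-1)) t :=
    (Real.hasDerivAt_log (by linarith : (1:ℝ) - t ≠ 0)).comp t h1
  exact h2.sub (Real.hasDerivAt_log ht0.ne')

lemma psi_monoOn : MonotoneOn
    (fun t : ℝ => t*(1-t)*(Real.log (1-t) - Real.log t)/(1-2*t)) (Set.Ioo 0 (1/2)) := by
  apply monotoneOn_of_hasDerivWithinAt_nonneg (convex_Ioo 0 (1/2))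
    (f' := fun t => (((1*(1-t) + t*(-1)) * (Real.log (1-t) - Real.log t)
        + t*(1-t) * ((1-t)⁻¹ * (-1) - t⁻¹)) * (1-2*t)
        - t*(1-t)*(Real.log (1-t) - Real.log t) * (0 - 2*1)) / (1-2*t)^2)
  · intro x hx
    obtain ⟨hx0, hx2⟩ := hx
    have h1x : (0:ℝ) < 1 - x := by linarith
    have hg : (1:ℝ) - 2*x ≠ 0 := by intro h; nlinarith
    exact ((((hasDerivAt_id x).mul ((hasDerivAt_id x).const_sub 1)).mul
      (hasDerivAt_a hx0 (by linarith))).div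
      (((hasDerivAt_id x).const_mul 2).const_sub 1) hg).continuousAt.continuousWithinAt
  · rw [interior_eq_iff_isOpen.2 isOpen_Ioo]
    intro x hx
    obtain ⟨hx0, hx2⟩ := hx
    have h1x : (0:ℝ) < 1 - x := by linarith
    have hg : (1:ℝ) - 2*x ≠ 0 := by intro h; nlinarith
    have hN : HasDerivAt (fun t : ℝ => t*(1-t)*(Real.log (1-t) - Real.log t))
        ((1*(1-x) + x*(-1)) * (Real.log (1-x) - Real.log x)
          + x*(1-x) * ((1-x)⁻¹ * (-1) - x⁻¹)) x :=
      (((hasDerivAt_id x).mul ((hasDerivAt_id x).const_sub 1))).mul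
        (hasDerivAt_a hx0 (by linarith))
    have hD : HasDerivAt (fun t : ℝ => 1-2*t) (0 - 2*1) x := by
      exact (hasDerivAt_const x 1).sub ((hasDerivAt_id x).const_mul 2)
    exact (hN.div hD hg).hasDerivWithinAt
  · rw [interior_eq_iff_isOpen.2 isOpen_Ioo]
    intro x hx
    obtain ⟨hx0, hx2⟩ := hx
    have h1x : (0:ℝ) < 1 - x := by linarith
    apply div_nonneg _ (sq_nonneg _)
    have hnum : ((1*(1-x) + x*(-1)) * (Real.log (1-x) - Real.log x)
        + x*(1-x) * ((1-x)⁻¹ * (-1) - x⁻¹)) * (1-2*x)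
        - x*(1-x)*(Real.log (1-x) - Real.log x) * (0 - 2*1)
        = (2*x^2 - 2*x + 1) * (Real.log (1-x) - Real.log x) - (1-2*x) := by
      field_simp
      ring
    rw [hnum]
    have := logC hx0 hx2
    linarith

lemma psi_mono {v q : ℝ} (hv0 : 0 < v) (hvq : v ≤ q) (hq : q < 1/2) :
    v*(1-v)*(Real.log (1-v) - Real.log v) * (1-2*q)
      ≤ q*(1-q)*(Real.log (1-q) - Real.log q) * (1-2*v) := by
  have h := psi_monoOn ⟨hv0, lt_of_le_of_lt hvq hq⟩ ⟨lt_of_lt_of_le hv0 hvq, hq⟩ hvq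
  beta_reduce at h
  rw [div_le_div_iff₀ (by linarith) (by linarith)] at h
  linarith



open Real Set

lemma ratio_monoOn {p : ℝ} (hp0 : 0 ≤ p) (hp : p < 1/2) : MonotoneOn
    (fun v : ℝ => (Real.log (1 - (p + (1-2*p)*v)) - Real.log (p + (1-2*p)*v))
      / (Real.log (1-v) - Real.log v)) (Set.Ioo 0 (1/2)) := by
  have hp2 : (0:ℝ) < 1 - 2*p := by linarith
  have hfacts : ∀ x ∈ Set.Ioo (0:ℝ) (1/2),
      0 < p + (1-2*p)*x ∧ p + (1-2*p)*x < 1/2 ∧ x ≤ p + (1-2*p)*x := by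
    intro x hx
    obtain ⟨hx0, hx2⟩ := hx
    refine ⟨by nlinarith, by nlinarith, by nlinarith⟩
  have hderiv : ∀ x ∈ Set.Ioo (0:ℝ) (1/2), HasDerivAt
      (fun v : ℝ => (Real.log (1 - (p + (1-2*p)*v)) - Real.log (p + (1-2*p)*v))
        / (Real.log (1-v) - Real.log v))
      ((((1 - (p + (1-2*p)*x))⁻¹ * (-((1-2*p)*1)) - (p + (1-2*p)*x)⁻¹ * ((1-2*p)*1))
          * (Real.log (1-x) - Real.log x)
        - (Real.log (1 - (p + (1-2*p)*x)) - Real.log (p + (1-2*p)*x))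
          * ((1-x)⁻¹ * (-1) - x⁻¹)) / (Real.log (1-x) - Real.log x)^2) x := by
    intro x hx
    obtain ⟨hℓ0, hℓ2, -⟩ := hfacts x hx
    obtain ⟨hx0, hx2⟩ := hx
    have hℓ : HasDerivAt (fun v : ℝ => p + (1-2*p)*v) ((1-2*p)*1) x :=
      ((hasDerivAt_id x).const_mul (1-2*p)).const_add p
    have hinner : HasDerivAt (fun v : ℝ => 1 - (p + (1-2*p)*v)) (-((1-2*p)*1)) x :=
      hℓ.const_sub 1
    have h1ℓne : (1:ℝ) - (p + (1-2*p)*x) ≠ 0 := by linarith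
    have hnum : HasDerivAt
        (fun v : ℝ => Real.log (1 - (p + (1-2*p)*v)) - Real.log (p + (1-2*p)*v))
        ((1 - (p + (1-2*p)*x))⁻¹ * (-((1-2*p)*1)) - (p + (1-2*p)*x)⁻¹ * ((1-2*p)*1)) x :=
      by
        have e1 := (Real.hasDerivAt_log h1ℓne).comp x hinner
        have e2 := (Real.hasDerivAt_log hℓ0.ne').comp x hℓ
        exact e1.sub e2
    have h1x : (0:ℝ) < 1 - x := by linarith
    have hden : HasDerivAt (fun v : ℝ => Real.log (1-v) - Real.log v)
        ((1-x)⁻¹ * (-1) - x⁻¹) x := by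
      exact ((Real.hasDerivAt_log h1x.ne').comp x ((hasDerivAt_id x).const_sub 1)).sub
        (Real.hasDerivAt_log hx0.ne')
    exact hnum.div hden (a_pos hx0 hx2).ne'
  apply monotoneOn_of_hasDerivWithinAt_nonneg (convex_Ioo 0 (1/2))
  · intro x hx
    exact (hderiv x hx).continuousAt.continuousWithinAt
  · rw [interior_eq_iff_isOpen.2 isOpen_Ioo]
    intro x hx
    exact (hderiv x hx).hasDerivWithinAt
  · rw [interior_eq_iff_isOpen.2 isOpen_Ioo]
    intro x hx
    obtain ⟨hℓ0, hℓ2, hxℓ⟩ := hfacts x hx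
    obtain ⟨hx0, hx2⟩ := hx
    have h1x : (0:ℝ) < 1 - x := by linarith
    have h1ℓ : (0:ℝ) < 1 - (p + (1-2*p)*x) := by linarith
    apply div_nonneg _ (sq_nonneg _)
    set ℓ := p + (1-2*p)*x with hℓdef
    have key : (1-2*p) * (x*(1-x)) * (Real.log (1-x) - Real.log x)
        ≤ (ℓ*(1-ℓ)) * (Real.log (1-ℓ) - Real.log ℓ) := by
      have hpsi := psi_mono hx0 hxℓ hℓ2
      have h12x : (0:ℝ) < 1 - 2*x := by linarith
      have hrel2 : x*(1-x)*(Real.log (1-x) - Real.log x)*(1-2*ℓ)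
          = x*(1-x)*(Real.log (1-x) - Real.log x)*((1-2*p)*(1-2*x)) := by
        rw [show 1-2*ℓ = (1-2*p)*(1-2*x) by rw [hℓdef]; ring]
      nlinarith [hpsi, hrel2, h12x]
    set NUM := ((1 - ℓ)⁻¹ * (-((1-2*p)*1)) - ℓ⁻¹ * ((1-2*p)*1))
          * (Real.log (1-x) - Real.log x)
        - (Real.log (1 - ℓ) - Real.log ℓ) * ((1-x)⁻¹ * (-1) - x⁻¹) with hNUM
    have hc : (0:ℝ) < x*(1-x)*(ℓ*(1-ℓ)) := by positivity
    have hmul : NUM * (x*(1-x)*(ℓ*(1-ℓ)))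
        = (ℓ*(1-ℓ)) * (Real.log (1-ℓ) - Real.log ℓ)
          - (1-2*p) * (x*(1-x)) * (Real.log (1-x) - Real.log x) := by
      rw [hNUM]
      field_simp
      ring
    have h0 : 0 ≤ (x*(1-x)*(ℓ*(1-ℓ))) * NUM := by rw [mul_comm, hmul]; linarith [key]
    exact nonneg_of_mul_nonneg_right h0 hc
  done

lemma ratio_mono {p : ℝ} (hp0 : 0 ≤ p) (hp : p < 1/2) {c₁ c₂ : ℝ}
    (h1 : 0 < c₁) (h12 : c₁ ≤ c₂) (h2 : c₂ < 1/2) :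
    (Real.log (1 - (p + (1-2*p)*c₁)) - Real.log (p + (1-2*p)*c₁))
        * (Real.log (1-c₂) - Real.log c₂)
      ≤ (Real.log (1 - (p + (1-2*p)*c₂)) - Real.log (p + (1-2*p)*c₂))
        * (Real.log (1-c₁) - Real.log c₁) := by
  have h := ratio_monoOn hp0 hp ⟨h1, lt_of_le_of_lt h12 h2⟩ ⟨lt_of_lt_of_le h1 h12, h2⟩ h12
  beta_reduce at h
  rw [div_le_div_iff₀ (a_pos h1 (lt_of_le_of_lt h12 h2)) (a_pos (lt_of_lt_of_le h1 h12) h2)] at h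
  linarith



open Real Set

lemma binEntropy_mono {x y : ℝ} (h0 : 0 ≤ x) (hxy : x ≤ y) (hy : y ≤ 1/2) :
    Real.binEntropy x ≤ Real.binEntropy y :=
  Real.binEntropy_strictMonoOn.monotoneOn ⟨h0, by norm_num; linarith⟩
    ⟨by linarith, by norm_num; linarith⟩ hxy

lemma binEntropy_lt {x y : ℝ} (h0 : 0 ≤ x) (hxy : x < y) (hy : y ≤ 1/2) :
    Real.binEntropy x < Real.binEntropy y :=
  Real.binEntropy_strictMonoOn ⟨h0, by norm_num; linarith⟩
    ⟨by linarith, by norm_num; linarith⟩ hxy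

set_option maxHeartbeats 1000000 in
/-- Chord inequality for Mrs. Gerber's Lemma, via Cauchy's MVT. -/
lemma chord {p x z y : ℝ} (hp0 : 0 ≤ p) (hp : p < 1/2)
    (hx : 0 ≤ x) (hxz : x ≤ z) (hzy : z ≤ y) (hy : y ≤ 1/2) :
    (Real.binEntropy y - Real.binEntropy x) * Real.binEntropy (p + (1-2*p)*z)
      ≤ (Real.binEntropy y - Real.binEntropy z) * Real.binEntropy (p + (1-2*p)*x)
        + (Real.binEntropy z - Real.binEntropy x) * Real.binEntropy (p + (1-2*p)*y) := by
  rcases eq_or_lt_of_le hxz with rfl | hxz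
  · apply le_of_eq; ring
  rcases eq_or_lt_of_le hzy with rfl | hzy
  · apply le_of_eq; ring
  have hk : (0:ℝ) < 1 - 2*p := by linarith
  -- the transformed function and its derivative
  set F : ℝ → ℝ := fun t => Real.binEntropy (p + (1-2*p)*t) with hF
  set F' : ℝ → ℝ := fun t => (Real.log (1 - (p + (1-2*p)*t)) - Real.log (p + (1-2*p)*t))
    * ((1-2*p)*1) with hF'
  set G' : ℝ → ℝ := fun t => Real.log (1-t) - Real.log t with hG'
  have hpos : ∀ t : ℝ, 0 < t → t < 1/2 → 0 < p + (1-2*p)*t ∧ p + (1-2*p)*t < 1/2 := by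
    intro t h1 h2; constructor <;> nlinarith
  have hFc : ContinuousOn F (Set.Icc x y) :=
    (Real.binEntropy_continuous.comp (continuous_const.add (continuous_const.mul continuous_id))).continuousOn
  have hGc : ContinuousOn Real.binEntropy (Set.Icc x y) :=
    Real.binEntropy_continuous.continuousOn
  have hFd : ∀ c : ℝ, 0 < c → c < 1/2 → HasDerivAt F (F' c) c := by
    intro c h1 h2
    obtain ⟨hq1, hq2⟩ := hpos c h1 h2
    exact (Real.hasDerivAt_binEntropy hq1.ne' (by linarith)).comp c
      (((hasDerivAt_id c).const_mul (1-2*p)).const_add p)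
  have hGd : ∀ c : ℝ, 0 < c → c < 1/2 → HasDerivAt Real.binEntropy (G' c) c := by
    intro c h1 h2
    exact Real.hasDerivAt_binEntropy h1.ne' (by norm_num; linarith)
  -- Cauchy MVT on [x,z]
  obtain ⟨c₁, hc₁, E1⟩ := exists_ratio_hasDerivAt_eq_ratio_slope F F' hxz
    (hFc.mono (Set.Icc_subset_Icc le_rfl hzy.le))
    (fun t ht => hFd t (lt_of_le_of_lt hx ht.1) (lt_of_lt_of_le (lt_of_lt_of_le ht.2 hzy.le) hy))
    Real.binEntropy G' (hGc.mono (Set.Icc_subset_Icc le_rfl hzy.le))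
    (fun t ht => hGd t (lt_of_le_of_lt hx ht.1) (lt_of_lt_of_le (lt_of_lt_of_le ht.2 hzy.le) hy))
  obtain ⟨c₂, hc₂, E2⟩ := exists_ratio_hasDerivAt_eq_ratio_slope F F' hzy
    (hFc.mono (Set.Icc_subset_Icc hxz.le le_rfl))
    (fun t ht => hFd t (lt_of_le_of_lt (hx.trans hxz.le) ht.1) (lt_of_lt_of_le ht.2 hy))
    Real.binEntropy G' (hGc.mono (Set.Icc_subset_Icc hxz.le le_rfl))
    (fun t ht => hGd t (lt_of_le_of_lt (hx.trans hxz.le) ht.1) (lt_of_lt_of_le ht.2 hy))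
  have hc10 : 0 < c₁ := lt_of_le_of_lt hx hc₁.1
  have hc12 : c₁ < 1/2 := by have := hc₁.2; linarith [hzy, hy]
  have hc20 : 0 < c₂ := lt_of_le_of_lt (hx.trans hxz.le) hc₂.1
  have hc22 : c₂ < 1/2 := lt_of_lt_of_le hc₂.2 hy
  have hcc : c₁ ≤ c₂ := le_of_lt (lt_trans hc₁.2 hc₂.1)
  have R := ratio_mono hp0 hp hc10 hcc hc22
  have hA1 : 0 < G' c₁ := a_pos hc10 hc12
  have hA2 : 0 < G' c₂ := a_pos hc20 hc22
  have hP : 0 < Real.binEntropy z - Real.binEntropy x :=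
    sub_pos.2 (binEntropy_lt hx hxz (by linarith))
  have hQ : 0 < Real.binEntropy y - Real.binEntropy z :=
    sub_pos.2 (binEntropy_lt (by linarith) hzy hy)
  -- notation
  set B1 : ℝ := Real.log (1 - (p + (1-2*p)*c₁)) - Real.log (p + (1-2*p)*c₁) with hB1
  set B2 : ℝ := Real.log (1 - (p + (1-2*p)*c₂)) - Real.log (p + (1-2*p)*c₂) with hB2
  have hF'1 : F' c₁ = B1 * ((1-2*p)*1) := rfl
  have hF'2 : F' c₂ = B2 * ((1-2*p)*1) := rfl
  rw [hF'1] at E1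
  rw [hF'2] at E2
  -- E1 : (H z - H x) * (B1 * ((1-2p)*1)) = (F z - F x) * G' c₁
  -- E2 : (H y - H z) * (B2 * ((1-2p)*1)) = (F y - F z) * G' c₂
  have h5 : (F z - F x) * (G' c₁ * G' c₂)
      = (Real.binEntropy z - Real.binEntropy x) * B1 * (1-2*p) * G' c₂ := by
    linear_combination G' c₂ * E1.symm
  have h6 : (F y - F z) * (G' c₁ * G' c₂)
      = (Real.binEntropy y - Real.binEntropy z) * B2 * (1-2*p) * G' c₁ := by
    linear_combination G' c₁ * E2.symm
  have h7 : ((Real.binEntropy z - Real.binEntropy x) * (F y - F z)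
        - (Real.binEntropy y - Real.binEntropy z) * (F z - F x)) * (G' c₁ * G' c₂)
      = (1-2*p) * (Real.binEntropy z - Real.binEntropy x)
          * (Real.binEntropy y - Real.binEntropy z) * (B2 * G' c₁ - B1 * G' c₂) := by
    linear_combination (Real.binEntropy z - Real.binEntropy x) * h6
      - (Real.binEntropy y - Real.binEntropy z) * h5
  have h8 : 0 ≤ ((Real.binEntropy z - Real.binEntropy x) * (F y - F z)
        - (Real.binEntropy y - Real.binEntropy z) * (F z - F x)) * (G' c₁ * G' c₂) := by
    rw [h7]
    apply mul_nonneg (mul_nonneg (mul_nonneg hk.le hP.le) hQ.le)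
    have R' : B1 * G' c₂ ≤ B2 * G' c₁ := R
    linarith [R']
  have h9 : 0 ≤ (G' c₁ * G' c₂) * ((Real.binEntropy z - Real.binEntropy x) * (F y - F z)
        - (Real.binEntropy y - Real.binEntropy z) * (F z - F x)) := by
    rw [mul_comm]; exact h8
  have h10 := nonneg_of_mul_nonneg_right h9 (mul_pos hA1 hA2)
  have hFx : F x = Real.binEntropy (p + (1-2*p)*x) := rfl
  have hFy : F y = Real.binEntropy (p + (1-2*p)*y) := rfl
  have hFz : F z = Real.binEntropy (p + (1-2*p)*z) := rfl
  rw [hFx, hFy, hFz] at h10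
  linarith [h10]



open Real Set

lemma exists_z {x y w : ℝ} (hx : 0 ≤ x) (hxy : x ≤ y) (hy : y ≤ 1/2)
    (hw : 0 ≤ w) (hw1 : w ≤ 1) :
    ∃ z ∈ Set.Icc x y,
      Real.binEntropy z = w * Real.binEntropy x + (1-w) * Real.binEntropy y := by
  have hHxy : Real.binEntropy x ≤ Real.binEntropy y := binEntropy_mono hx hxy hy
  have hmem : w * Real.binEntropy x + (1-w) * Real.binEntropy y
      ∈ Set.Icc (Real.binEntropy x) (Real.binEntropy y) := by
    constructor <;> nlinarith
  have := intermediate_value_Icc hxy Real.binEntropy_continuous.continuousOn hmem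
  obtain ⟨z, hz, hzeq⟩ := this
  exact ⟨z, hz, hzeq⟩

lemma mgl2 {p x y w z : ℝ} (hp0 : 0 ≤ p) (hp : p < 1/2)
    (hx : x ∈ Set.Icc (0:ℝ) (1/2)) (hy : y ∈ Set.Icc (0:ℝ) (1/2))
    (hw : 0 ≤ w) (hw1 : w ≤ 1) (hz : z ∈ Set.Icc (0:ℝ) (1/2))
    (hzeq : Real.binEntropy z = w * Real.binEntropy x + (1-w) * Real.binEntropy y) :
    Real.binEntropy (p + (1-2*p)*z)
      ≤ w * Real.binEntropy (p+(1-2*p)*x) + (1-w) * Real.binEntropy (p+(1-2*p)*y) := by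
  rcases le_total x y with hxy | hxy
  · have hHxy : Real.binEntropy x ≤ Real.binEntropy y := binEntropy_mono hx.1 hxy hy.2
    have hz1 : Real.binEntropy x ≤ Real.binEntropy z := by rw [hzeq]; nlinarith
    have hz2 : Real.binEntropy z ≤ Real.binEntropy y := by rw [hzeq]; nlinarith
    have hxz : x ≤ z := by
      by_contra hlt
      push_neg at hlt
      exact absurd hz1 (not_le.2 (binEntropy_lt hz.1 hlt hx.2))
    have hzy : z ≤ y := by
      by_contra hlt
      push_neg at hlt
      exact absurd hz2 (not_le.2 (binEntropy_lt hy.1 hlt hz.2))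
    rcases eq_or_lt_of_le hHxy with heq | hlt
    · -- binEntropy x = binEntropy y, so x = y and z = x
      have hxy' : x = y := by
        by_contra hne
        exact absurd heq (ne_of_lt (binEntropy_lt hx.1 (lt_of_le_of_ne hxy hne) hy.2))
      subst hxy'
      have hzx : z = x := le_antisymm hzy hxz
      subst hzx
      apply le_of_eq; ring
    · have hch := chord hp0 hp hx.1 hxz hzy hy.2
      rw [hzeq] at hch
      nlinarith [hch, hlt]
  · have hHxy : Real.binEntropy y ≤ Real.binEntropy x := binEntropy_mono hy.1 hxy hx.2
    have hz1 : Real.binEntropy y ≤ Real.binEntropy z := by rw [hzeq]; nlinarith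
    have hz2 : Real.binEntropy z ≤ Real.binEntropy x := by rw [hzeq]; nlinarith
    have hyz : y ≤ z := by
      by_contra hlt
      push_neg at hlt
      exact absurd hz1 (not_le.2 (binEntropy_lt hz.1 hlt hy.2))
    have hzx : z ≤ x := by
      by_contra hlt
      push_neg at hlt
      exact absurd hz2 (not_le.2 (binEntropy_lt hx.1 hlt hz.2))
    rcases eq_or_lt_of_le hHxy with heq | hlt
    · have hxy' : y = x := by
        by_contra hne
        exact absurd heq (ne_of_lt (binEntropy_lt hy.1 (lt_of_le_of_ne hxy hne) hx.2))
      subst hxy'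
      have hzy' : z = y := le_antisymm hzx hyz
      subst hzy'
      apply le_of_eq; ring
    · have hch := chord hp0 hp hy.1 hyz hzx hx.2
      rw [hzeq] at hch
      nlinarith [hch, hlt]

lemma c1_bound {p w1 w2 α1 α2 c : ℝ} (hp0 : 0 ≤ p) (hp : p < 1/2)
    (hw1 : 0 ≤ w1) (hw2 : 0 ≤ w2) (hsum : w1 + w2 = 1)
    (hα1 : α1 ∈ Set.Icc (0:ℝ) (1/2)) (hα2 : α2 ∈ Set.Icc (0:ℝ) (1/2))
    (hc : c ∈ Set.Icc (0:ℝ) (1/2))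
    (hcon : w1 * Real.binEntropy (p+(1-2*p)*α1) + w2 * Real.binEntropy (p+(1-2*p)*α2)
        ≤ Real.binEntropy (p+(1-2*p)*c)) :
    w1 * Real.binEntropy α1 + w2 * Real.binEntropy α2 ≤ Real.binEntropy c := by
  have hw2' : w2 = 1 - w1 := by linarith
  subst hw2'
  have hw1' : w1 ≤ 1 := by linarith
  obtain ⟨z, hzmem, hzeq⟩ : ∃ z ∈ Set.Icc (min α1 α2) (max α1 α2), Real.binEntropy z
      = w1 * Real.binEntropy α1 + (1-w1) * Real.binEntropy α2 := by
    rcases le_total α1 α2 with h | h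
    · rw [min_eq_left h, max_eq_right h]
      exact exists_z hα1.1 h hα2.2 hw1 hw1'
    · rw [min_eq_right h, max_eq_left h]
      obtain ⟨z, hz, hzeq⟩ := exists_z hα2.1 h hα1.2 (by linarith : (0:ℝ) ≤ 1 - w1)
        (by linarith : 1 - w1 ≤ 1)
      exact ⟨z, hz, by rw [hzeq]; ring⟩
  have hzI : z ∈ Set.Icc (0:ℝ) (1/2) :=
    ⟨le_trans (le_min hα1.1 hα2.1) hzmem.1, le_trans hzmem.2 (max_le hα1.2 hα2.2)⟩
  have hm := mgl2 hp0 hp hα1 hα2 hw1 hw1' hzI hzeq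
  have hHz : Real.binEntropy (p + (1-2*p)*z) ≤ Real.binEntropy (p + (1-2*p)*c) :=
    le_trans hm hcon
  have hℓz : p + (1-2*p)*z ≤ 1/2 := by nlinarith [hzI.1, hzI.2]
  have hℓc0 : 0 ≤ p + (1-2*p)*c := by nlinarith [hc.1, hc.2]
  have hzc : z ≤ c := by
    by_contra hlt
    push_neg at hlt
    have : Real.binEntropy (p + (1-2*p)*c) < Real.binEntropy (p + (1-2*p)*z) :=
      binEntropy_lt hℓc0 (by nlinarith) hℓz
    linarith
  rw [← hzeq]
  exact binEntropy_mono hzI.1 hzc hc.2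

lemma jensen2 {w e0 e1 : ℝ} (hw0 : 0 ≤ w) (hw1 : w ≤ 1)
    (h0 : e0 ∈ Set.Icc (0:ℝ) 1) (h1 : e1 ∈ Set.Icc (0:ℝ) 1) :
    w * Real.binEntropy e0 + (1-w) * Real.binEntropy e1
      ≤ Real.binEntropy (w*e0 + (1-w)*e1) := by
  have := Real.strictConcave_binEntropy.concaveOn.2 h0 h1 hw0 (by linarith : (0:ℝ) ≤ 1 - w)
    (by ring)
  simpa using this



open Real

lemma colEnt {u v : ℝ} (hu : 0 ≤ u) (hv : 0 ≤ v) :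
    u * Real.logb 2 (u/(u+v)) + v * Real.logb 2 (v/(u+v))
      = -((u+v) * binEnt (v/(u+v))) := by
  rcases eq_or_lt_of_le (add_nonneg hu hv) with h0 | hw
  · have hu0 : u = 0 := by linarith
    have hv0 : v = 0 := by linarith
    simp [hu0, hv0, binEnt]
  · have h1 : u/(u+v) = 1 - v/(u+v) := by field_simp; ring
    have hu'' : u = (u+v) * (1 - v/(u+v)) := by field_simp; ring
    have hv'' : v = (u+v) * (v/(u+v)) := by field_simp
    rw [h1]
    have hb : binEnt (v/(u+v)) = -((v/(u+v)) * Real.logb 2 (v/(u+v)))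
        - (1 - v/(u+v)) * Real.logb 2 (1 - v/(u+v)) := rfl
    linear_combination (Real.logb 2 (1 - v/(u+v))) * hu''
      + (Real.logb 2 (v/(u+v))) * hv'' + (u+v) * hb

lemma term_split {m r c : ℝ} (hm : 0 ≤ m) (hmr : m ≤ r) (hmc : m ≤ c) :
    m * Real.logb 2 (m / (r * c)) = m * Real.logb 2 (m / c) - m * Real.logb 2 r := by
  rcases eq_or_lt_of_le hm with h0 | hm0
  · simp [← h0]
  · have hr : 0 < r := lt_of_lt_of_le hm0 hmr
    have hc : 0 < c := lt_of_lt_of_le hm0 hmc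
    rw [Real.logb_div hm0.ne' (by positivity), Real.logb_mul hr.ne' hc.ne',
      Real.logb_div hm0.ne' hc.ne']
    ring

lemma condEnt2_eval (n : Bool → Bool → ℝ) (hn : ∀ s y, 0 ≤ n s y) :
    condEnt2 n = ∑ y : Bool,
      ((n false y + n true y) * binEnt (n true y / (n false y + n true y))) := by
  unfold condEnt2
  apply Finset.sum_congr rfl
  intro y _
  rw [Fintype.sum_bool]
  simp only [Fintype.sum_bool]
  have hc := colEnt (hn false y) (hn true y)
  have hcomm : n true y + n false y = n false y + n true y := add_comm _ _
  rw [hcomm]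
  linarith [hc]

lemma mi2_eval (m : Bool → Bool → ℝ) (hm : ∀ x y, 0 ≤ m x y) (t : ℝ)
    (hrowT : m true true + m true false = t)
    (hrowF : m false true + m false false = 1 - t) :
    mi2 m = binEnt t - ∑ y : Bool,
      ((m false y + m true y) * binEnt (m true y / (m false y + m true y))) := by
  unfold mi2
  simp only [Fintype.sum_bool]
  rw [hrowT, hrowF,
    add_comm (m true true) (m false true), add_comm (m true false) (m false false)]
  have hT : 0 ≤ t := by linarith [hm true true, hm true false, hrowT]
  have hF : 0 ≤ 1 - t := by linarith [hm false true, hm false false, hrowF]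
  have s1 := term_split (hm true true) (show m true true ≤ t by linarith [hm true false])
    (show m true true ≤ m false true + m true true by linarith [hm false true])
  have s2 := term_split (hm true false) (show m true false ≤ t by linarith [hm true true])
    (show m true false ≤ m false false + m true false by linarith [hm false false])
  have s3 := term_split (hm false true)
    (show m false true ≤ 1 - t by linarith [hm false false])
    (show m false true ≤ m false true + m true true by linarith [hm true true])
  have s4 := term_split (hm false false)
    (show m false false ≤ 1 - t by linarith [hm false true])
    (show m false false ≤ m false false + m true false by linarith [hm true false])
  have c1 := colEnt (hm false true) (hm true true)
  have c2 := colEnt (hm false false) (hm true false)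
  have hb : binEnt t = -(t * Real.logb 2 t) - (1-t) * Real.logb 2 (1-t) := rfl
  linear_combination s1 + s2 + s3 + s4 + c1 + c2 - hb
    - (Real.logb 2 t) * hrowT - (Real.logb 2 (1-t)) * hrowF



open Real

lemma log2_pos : (0:ℝ) < Real.log 2 := Real.log_pos one_lt_two

lemma sum_le_transfer {w1 w2 X1 X2 Y : ℝ} :
    (w1 * (X1 / Real.log 2) + w2 * (X2 / Real.log 2) ≤ Y / Real.log 2)
      ↔ (w1 * X1 + w2 * X2 ≤ Y) := by
  rw [show w1 * (X1 / Real.log 2) + w2 * (X2 / Real.log 2)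
    = (w1 * X1 + w2 * X2) / Real.log 2 by ring]
  exact div_le_div_iff_of_pos_right log2_pos

/-- binEnt version of the Mrs. Gerber bound, with `α`s in `[0,1]`. -/
lemma c1_bound' {p w1 w2 α1 α2 c : ℝ} (hp0 : 0 ≤ p) (hp : p < 1/2)
    (hw1 : 0 ≤ w1) (hw2 : 0 ≤ w2) (hsum : w1 + w2 = 1)
    (hα1 : α1 ∈ Set.Icc (0:ℝ) 1) (hα2 : α2 ∈ Set.Icc (0:ℝ) 1)
    (hc : c ∈ Set.Icc (0:ℝ) (1/2))
    (hcon : w1 * binEnt (p+(1-2*p)*α1) + w2 * binEnt (p+(1-2*p)*α2)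
        ≤ binEnt (p+(1-2*p)*c)) :
    w1 * binEnt α1 + w2 * binEnt α2 ≤ binEnt c := by
  -- reflect the αs into [0,1/2]
  have reflect : ∀ α : ℝ, α ∈ Set.Icc (0:ℝ) 1 → ∃ β : ℝ, β ∈ Set.Icc (0:ℝ) (1/2)
      ∧ binEnt β = binEnt α ∧ binEnt (p+(1-2*p)*β) = binEnt (p+(1-2*p)*α) := by
    intro α hα
    rcases le_total α (1-α) with h | h
    · exact ⟨α, ⟨hα.1, by linarith⟩, rfl, rfl⟩
    · refine ⟨1-α, ⟨by linarith [hα.2], by linarith⟩, binEnt_one_sub α, ?_⟩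
      rw [show p+(1-2*p)*(1-α) = 1 - (p+(1-2*p)*α) by ring, binEnt_one_sub]
  obtain ⟨β1, hβ1, he1, he1'⟩ := reflect α1 hα1
  obtain ⟨β2, hβ2, he2, he2'⟩ := reflect α2 hα2
  rw [← he1, ← he2]
  rw [← he1', ← he2'] at hcon
  rw [binEnt_eq, binEnt_eq, binEnt_eq, sum_le_transfer] at hcon ⊢
  exact c1_bound hp0 hp hw1 hw2 hsum hβ1 hβ2 hc hcon

lemma jensen2' {w1 w2 e0 e1 : ℝ} (hw1 : 0 ≤ w1) (hw2 : 0 ≤ w2) (hsum : w1 + w2 = 1)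
    (h0 : e0 ∈ Set.Icc (0:ℝ) 1) (h1 : e1 ∈ Set.Icc (0:ℝ) 1) :
    w1 * binEnt e0 + w2 * binEnt e1 ≤ binEnt (w1*e0 + w2*e1) := by
  have hw2' : w2 = 1 - w1 := by linarith
  subst hw2'
  rw [binEnt_eq, binEnt_eq, binEnt_eq, sum_le_transfer]
  exact jensen2 hw1 (by linarith) h0 h1

lemma mul_div_self_eq {w m1 : ℝ} (h0 : 0 ≤ m1) (h1 : m1 ≤ w) : w * (m1 / w) = m1 := by
  rcases eq_or_lt_of_le (le_trans h0 h1) with h | h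
  · rw [← h] at h1 ⊢
    simp
    linarith
  · rw [mul_comm, div_mul_cancel₀ m1 (ne_of_gt h)]

lemma col_transform {p mf mt : ℝ} (hmf : 0 ≤ mf) (hmt : 0 ≤ mt) :
    (((1-p)*mf + p*mt) + (p*mf + (1-p)*mt))
        * binEnt ((p*mf + (1-p)*mt) / (((1-p)*mf + p*mt) + (p*mf + (1-p)*mt)))
      = (mf + mt) * binEnt (p + (1-2*p)*(mt/(mf+mt))) := by
  rcases eq_or_lt_of_le (add_nonneg hmf hmt) with h | h
  · have h1 : mf = 0 := by linarith
    have h2 : mt = 0 := by linarith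
    rw [h1, h2]; norm_num
  · have h1 : ((1-p)*mf + p*mt) + (p*mf + (1-p)*mt) = mf + mt := by ring
    rw [h1]
    congr 1
    have hne : mf + mt ≠ 0 := ne_of_gt h
    field_simp
    ring

lemma converse_extract (p₁ b0 : ℝ) (hp0 : 0 ≤ p₁) (hp : p₁ < 1/2)
    (q : Bool → Bool → Bool → ℝ)
    (hq0 : ∀ s x xh, 0 ≤ q s x xh)
    (hmarg : ∀ s x, ∑ xh : Bool, q s x xh = bern b0 x * bern p₁ (Bool.xor s x))
    (hmark : ∀ s x xh, q s x xh * (∑ s' : Bool, ∑ xh' : Bool, q s' x xh')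
      = (∑ xh' : Bool, q s x xh') * (∑ s' : Bool, q s' x xh)) :
    ∃ w1 w2 α1 α2 : ℝ, 0 ≤ w1 ∧ 0 ≤ w2 ∧ w1 + w2 = 1 ∧
      α1 ∈ Set.Icc (0:ℝ) 1 ∧ α2 ∈ Set.Icc (0:ℝ) 1 ∧
      w1*α1 + w2*α2 = b0 ∧
      (∑ s : Bool, ∑ x : Bool, ∑ xh : Bool, q s x xh * (if x = xh then 0 else 1))
        = w1*(1-α1) + w2*α2 ∧
      condEnt2 (fun s xh => ∑ x : Bool, q s x xh)
        = w1 * binEnt (p₁+(1-2*p₁)*α1) + w2 * binEnt (p₁+(1-2*p₁)*α2) ∧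
      mi2 (fun x xh => ∑ s : Bool, q s x xh)
        = binEnt b0 - (w1 * binEnt α1 + w2 * binEnt α2) := by
  set m : Bool → Bool → ℝ := fun x y => ∑ s : Bool, q s x y with hmdef
  have hment : ∀ x y, m x y = q true x y + q false x y := by
    intro x y; rw [hmdef]; exact Fintype.sum_bool _
  have hm0 : ∀ x y, 0 ≤ m x y := by
    intro x y; rw [hment]; exact add_nonneg (hq0 _ _ _) (hq0 _ _ _)
  have hmargs : ∀ s x, q s x true + q s x false = bern b0 x * bern p₁ (Bool.xor s x) := by
    intro s x
    rw [← Fintype.sum_bool (fun xh => q s x xh)]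
    exact hmarg s x
  have htot : ∀ x, (∑ s' : Bool, ∑ xh' : Bool, q s' x xh') = bern b0 x := by
    intro x
    rw [Fintype.sum_bool]
    rw [hmarg true x, hmarg false x]
    cases x <;> simp [bern] <;> ring
  have hfact : ∀ s x y, q s x y = bern p₁ (Bool.xor s x) * m x y := by
    intro s x y
    have hM := hmark s x y
    rw [htot x, hmarg s x] at hM
    rcases eq_or_ne (bern b0 x) 0 with hz | hz
    · have h1 : q s x y = 0 := by
        have := hmargs s x
        rw [hz, zero_mul] at this
        cases y
        · linarith [hq0 s x true, hq0 s x false]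
        · linarith [hq0 s x true, hq0 s x false]
      have h2 : m x y = 0 := by
        have ht := hmargs true x
        have hf := hmargs false x
        rw [hz, zero_mul] at ht hf
        rw [hment]
        cases y
        · linarith [hq0 true x true, hq0 true x false, hq0 false x true, hq0 false x false]
        · linarith [hq0 true x true, hq0 true x false, hq0 false x true, hq0 false x false]
      rw [h1, h2, mul_zero]
    · apply mul_right_cancel₀ hz
      rw [hM]
      have : (∑ s' : Bool, q s' x y) = m x y := by
        rw [hment]; exact Fintype.sum_bool _
      rw [this]; ring
  -- the parameters
  refine ⟨m false true + m true true, m false false + m true false,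
    m true true / (m false true + m true true),
    m true false / (m false false + m true false), ?_, ?_, ?_, ?_, ?_, ?_, ?_, ?_, ?_⟩
  case _ => exact add_nonneg (hm0 _ _) (hm0 _ _)
  case _ => exact add_nonneg (hm0 _ _) (hm0 _ _)
  case _ =>
    have h1 := hmargs true true
    have h2 := hmargs false true
    have h3 := hmargs true false
    have h4 := hmargs false false
    simp [bern] at h1 h2 h3 h4
    simp only [hment]
    nlinarith [h1, h2, h3, h4]
  case _ =>
    constructor
    · exact div_nonneg (hm0 _ _) (add_nonneg (hm0 _ _) (hm0 _ _))
    · rcases eq_or_lt_of_le (add_nonneg (hm0 false true) (hm0 true true)) with h | h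
      · rw [← h]; simp
      · rw [div_le_one h]; linarith [hm0 false true]
  case _ =>
    constructor
    · exact div_nonneg (hm0 _ _) (add_nonneg (hm0 _ _) (hm0 _ _))
    · rcases eq_or_lt_of_le (add_nonneg (hm0 false false) (hm0 true false)) with h | h
      · rw [← h]; simp
      · rw [div_le_one h]; linarith [hm0 false false]
  case _ =>
    rw [mul_div_self_eq (hm0 true true) (by linarith [hm0 false true]),
      mul_div_self_eq (hm0 true false) (by linarith [hm0 false false])]
    have h1 := hmargs true true
    have h2 := hmargs false true
    simp [bern] at h1 h2
    simp only [hment]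
    nlinarith [h1, h2]
  case _ =>
    simp only [Fintype.sum_bool]
    norm_num
    rw [mul_one_sub, mul_div_self_eq (hm0 true true) (by linarith [hm0 false true]),
      mul_div_self_eq (hm0 true false) (by linarith [hm0 false false])]
    have e1 := hment true false
    have e2 := hment false true
    simp only [hment] at e1 e2 ⊢
    linarith [e1, e2]
  case _ =>
    have hn0 : ∀ s y : Bool, 0 ≤ (fun s xh => ∑ x : Bool, q s x xh) s y :=
      fun s y => Finset.sum_nonneg fun x _ => hq0 _ _ _
    rw [condEnt2_eval _ hn0, Fintype.sum_bool]
    have hnt : ∀ y, (∑ x : Bool, q true x y) = p₁ * m false y + (1-p₁) * m true y := by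
      intro y; rw [Fintype.sum_bool, hfact true true y, hfact true false y]
      simp [bern]; ring
    have hnf : ∀ y, (∑ x : Bool, q false x y) = (1-p₁) * m false y + p₁ * m true y := by
      intro y; rw [Fintype.sum_bool, hfact false true y, hfact false false y]
      simp [bern]; ring
    rw [hnt true, hnf true, hnt false, hnf false,
      col_transform (p := p₁) (hm0 false true) (hm0 true true),
      col_transform (p := p₁) (hm0 false false) (hm0 true false)]
  case _ =>
    have hrowT : m true true + m true false = b0 := by
      have h1 := hmargs true true
      have h2 := hmargs false true
      simp [bern] at h1 h2
      simp only [hment]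
      nlinarith [h1, h2]
    have hrowF : m false true + m false false = 1 - b0 := by
      have h1 := hmargs true false
      have h2 := hmargs false false
      simp [bern] at h1 h2
      simp only [hment]
      nlinarith [h1, h2]
    rw [mi2_eval m hm0 b0 hrowT hrowF, Fintype.sum_bool]


open Real

lemma bern_nonneg {p : ℝ} (h0 : 0 ≤ p) (h1 : p ≤ 1) (b : Bool) : 0 ≤ bern p b := by
  cases b <;> simp [bern] <;> linarith

lemma condEnt2_bsc (w g : ℝ) (hw0 : 0 ≤ w) (hwh : w ≤ 1/2) (hg0 : 0 ≤ g) (hg1 : g ≤ 1) :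
    condEnt2 (fun s y => bern w y * bern (cond y (1-g) g) s) = binEnt g := by
  have hn : ∀ s y : Bool, 0 ≤ bern w y * bern (cond y (1-g) g) s := by
    intro s y
    apply mul_nonneg (bern_nonneg hw0 (by linarith) y)
    cases y <;> exact bern_nonneg (by simp; linarith) (by simp; linarith) s
  rw [condEnt2_eval _ hn, Fintype.sum_bool]
  simp only [bern, cond]
  norm_num
  rw [show w*g + w*(1-g) = w by ring, show (1-w)*(1-g) + (1-w)*g = 1-w by ring,
    mul_div_cancel_left₀ g (show (1:ℝ)-w ≠ 0 by linarith)]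
  rcases eq_or_lt_of_le hw0 with h0 | h0
  · rw [← h0]; simp
  · rw [mul_div_cancel_left₀ (1-g) (ne_of_gt h0), binEnt_one_sub]
    ring

lemma mi2_bsc (w d t : ℝ) (hw0 : 0 ≤ w) (hwh : w ≤ 1/2) (hd0 : 0 ≤ d) (hd1 : d ≤ 1)
    (ht : w*(1-d) + (1-w)*d = t) :
    mi2 (fun x y => bern w y * bern (cond y (1-d) d) x) = binEnt t - binEnt d := by
  have hm : ∀ x y : Bool, 0 ≤ bern w y * bern (cond y (1-d) d) x := by
    intro x y
    apply mul_nonneg (bern_nonneg hw0 (by linarith) y)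
    cases y <;> exact bern_nonneg (by simp; linarith) (by simp; linarith) x
  rw [mi2_eval _ hm t (by simp [bern]; linarith) (by simp [bern]; linarith)]
  rw [Fintype.sum_bool]
  simp only [bern, cond]
  norm_num
  rw [show w*d + w*(1-d) = w by ring, show (1-w)*(1-d) + (1-w)*d = 1-w by ring,
    mul_div_cancel_left₀ d (show (1:ℝ)-w ≠ 0 by linarith)]
  rcases eq_or_lt_of_le hw0 with h0 | h0
  · rw [← h0]; simp
  · rw [mul_div_cancel_left₀ (1-d) (ne_of_gt h0), binEnt_one_sub]
    ring

lemma achieve (p₁ b0 d D C : ℝ) (hp0 : 0 ≤ p₁) (hp : p₁ < 1/2)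
    (hd0 : 0 ≤ d) (hdb : d ≤ b0) (hb0h : b0 ≤ 1/2)
    (hdD : d ≤ D) (hdC : binEnt (p₁ + (1-2*p₁)*d) ≤ C) :
    ∃ q : Bool → Bool → Bool → ℝ, (∀ s x xh, 0 ≤ q s x xh) ∧
      (∀ s x, ∑ xh : Bool, q s x xh = bern b0 x * bern p₁ (Bool.xor s x)) ∧
      (∀ s x xh, q s x xh * (∑ s' : Bool, ∑ xh' : Bool, q s' x xh')
          = (∑ xh' : Bool, q s x xh') * (∑ s' : Bool, q s' x xh)) ∧
      (∑ s : Bool, ∑ x : Bool, ∑ xh : Bool, q s x xh * (if x = xh then 0 else 1)) ≤ D ∧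
      condEnt2 (fun s xh => ∑ x : Bool, q s x xh) ≤ C ∧
      mi2 (fun x xh => ∑ s : Bool, q s x xh) = binEnt b0 - binEnt d := by
  have hd1 : d ≤ 1 := by linarith
  set β : ℝ := (b0 - d)/(1 - 2*d) with hβdef
  have hβ0 : 0 ≤ β := div_nonneg (by linarith) (by linarith)
  have hβh : β ≤ 1/2 := by
    rcases lt_or_eq_of_le (show d ≤ 1/2 by linarith) with h | h
    · rw [hβdef, div_le_iff₀ (by linarith)]; linarith
    · rw [hβdef, h, show (1:ℝ) - 2*(1/2) = 0 by norm_num, div_zero]; norm_num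
  have hkey : β*(1-d) + (1-β)*d = b0 := by
    rcases lt_or_eq_of_le (show d ≤ 1/2 by linarith) with h | h
    · have h2d : (1:ℝ) - 2*d ≠ 0 := by linarith
      rw [hβdef]
      linear_combination div_mul_cancel₀ (b0 - d) h2d
    · rw [hβdef, h, show (1:ℝ) - 2*(1/2) = 0 by norm_num, div_zero]
      norm_num
      linarith
  refine ⟨fun s x xh => bern p₁ (Bool.xor s x) * (bern β xh * bern (cond xh (1-d) d) x),
    ?_, ?_, ?_, ?_, ?_, ?_⟩
  · intro s x xh
    apply mul_nonneg (bern_nonneg hp0 (by linarith) _)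
    apply mul_nonneg (bern_nonneg hβ0 (by linarith) _)
    cases xh <;> exact bern_nonneg (by simp; linarith) (by simp; linarith) x
  · intro s x
    rw [Fintype.sum_bool]
    cases s <;> cases x <;> simp [bern] <;> nlinarith [hkey]
  · intro s x xh
    simp only [Fintype.sum_bool]
    cases s <;> cases x <;> cases xh <;> simp [bern] <;> ring
  · simp only [Fintype.sum_bool]
    simp [bern]
    nlinarith [hkey]
  · have hEq1 : (fun s xh => ∑ x : Bool,
        bern p₁ (Bool.xor s x) * (bern β xh * bern (cond xh (1-d) d) x))
        = (fun s y => bern β y * bern (cond y (1-(p₁ + (1-2*p₁)*d)) (p₁ + (1-2*p₁)*d)) s) := by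
      funext s y
      rw [Fintype.sum_bool]
      cases s <;> cases y <;> simp [bern] <;> ring
    rw [hEq1, condEnt2_bsc β (p₁ + (1-2*p₁)*d) hβ0 hβh (by nlinarith) (by nlinarith)]
    exact hdC
  · have hEq2 : (fun x xh => ∑ s : Bool,
        bern p₁ (Bool.xor s x) * (bern β xh * bern (cond xh (1-d) d) x))
        = (fun x y => bern β y * bern (cond y (1-d) d) x) := by
      funext x y
      rw [Fintype.sum_bool]
      cases x <;> cases y <;> simp [bern] <;> ring
    rw [hEq2, mi2_bsc β d b0 hβ0 hβh hd0 hd1 (by linarith [hkey])]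


end RDC

/-- closed form of the binary rate-distortion-classification function.
`hinvC = H⁻¹(C)` where `H⁻¹ : [0,1] → [0,1/2]` is the inverse of binary entropy. -/
theorem stmt1 (a p₁ D C hinvC : ℝ)
    (ha0 : 0 ≤ a) (ha : a ≤ 1 / 2) (hp0 : 0 ≤ p₁) (hp : p₁ < 1 / 2) (hpa : p₁ ≤ a)
    (hD0 : 0 ≤ D) (hC : binEnt p₁ ≤ C)
    (hinv_mem : hinvC ∈ Set.Icc (0 : ℝ) (1 / 2)) (hinv_eq : binEnt hinvC = C) :
    let b0 : ℝ := (a - p₁) / (1 - 2 * p₁)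
    let b : ℝ := min b0 (1 - b0)
    let C₁ : ℝ := (hinvC - p₁) / (1 - 2 * p₁)
    -- achievable rates: `I(X; X̂)` over all conditional distributions `p(x̂|x)`
    -- (equivalently, all joints `q` of `(S, X, X̂)` with `S - X - X̂` Markov and the given
    -- source) satisfying the distortion and classification constraints
    let feas : Set ℝ := {r | ∃ q : Bool → Bool → Bool → ℝ,
      (∀ s x xh, 0 ≤ q s x xh) ∧
      (∀ s x, ∑ xh : Bool, q s x xh = bern b0 x * bern p₁ (Bool.xor s x)) ∧
      (∀ s x xh, q s x xh * (∑ s' : Bool, ∑ xh' : Bool, q s' x xh')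
          = (∑ xh' : Bool, q s x xh') * (∑ s' : Bool, q s' x xh)) ∧
      (∑ s : Bool, ∑ x : Bool, ∑ xh : Bool,
          q s x xh * (if x = xh then 0 else 1)) ≤ D ∧
      condEnt2 (fun s xh => ∑ x : Bool, q s x xh) ≤ C ∧
      r = mi2 (fun x xh => ∑ s : Bool, q s x xh)}
    (C₁ ≤ D → C₁ ≤ b → sInf feas = binEnt b - binEnt C₁) ∧
    (D < C₁ → D ≤ b → sInf feas = binEnt b - binEnt D) ∧
    (b < min D C₁ → sInf feas = 0) := by
  intro b0 b C₁ feas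
  have hp2 : (0:ℝ) < 1 - 2*p₁ := by linarith
  have hb0eq : b0 = (a - p₁)/(1 - 2*p₁) := rfl
  have hb00 : 0 ≤ b0 := by rw [hb0eq]; exact div_nonneg (by linarith) hp2.le
  have hb0h : b0 ≤ 1/2 := by rw [hb0eq, div_le_iff₀ hp2]; linarith
  have hbb : b = b0 := min_eq_left (by linarith)
  have hab0 : p₁ + (1-2*p₁)*b0 = a := by rw [hb0eq, mul_div_cancel₀ _ hp2.ne']; ring
  have hC₁eq : C₁ = (hinvC - p₁)/(1-2*p₁) := rfl
  obtain ⟨hinv0, hinvh⟩ := hinv_mem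
  have hphi : p₁ ≤ hinvC :=
    (RDC.binEnt_le_iff hp0 hp.le hinv0 hinvh).mp (by rw [hinv_eq]; exact hC)
  have hC₁0 : 0 ≤ C₁ := by rw [hC₁eq]; exact div_nonneg (by linarith) hp2.le
  have hC₁h : C₁ ≤ 1/2 := by rw [hC₁eq, div_le_iff₀ hp2]; linarith
  have hkey : p₁ + (1-2*p₁)*C₁ = hinvC := by rw [hC₁eq, mul_div_cancel₀ _ hp2.ne']; ring
  -- membership helper (achievability)
  have hmem : ∀ d : ℝ, 0 ≤ d → d ≤ b0 → d ≤ D → binEnt (p₁ + (1-2*p₁)*d) ≤ C →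
      (binEnt b0 - binEnt d) ∈ feas := by
    intro d h1 h2 h3 h4
    obtain ⟨q, hq⟩ := RDC.achieve p₁ b0 d D C hp0 hp h1 h2 hb0h h3 h4
    exact ⟨q, hq.1, hq.2.1, hq.2.2.1, hq.2.2.2.1, hq.2.2.2.2.1, hq.2.2.2.2.2.symm⟩
  -- converse extraction
  have hext : ∀ r ∈ feas, ∃ w1 w2 α1 α2 : ℝ, 0 ≤ w1 ∧ 0 ≤ w2 ∧ w1 + w2 = 1 ∧
      α1 ∈ Set.Icc (0:ℝ) 1 ∧ α2 ∈ Set.Icc (0:ℝ) 1 ∧ w1*α1 + w2*α2 = b0 ∧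
      w1*(1-α1) + w2*α2 ≤ D ∧
      w1 * binEnt (p₁+(1-2*p₁)*α1) + w2 * binEnt (p₁+(1-2*p₁)*α2) ≤ C ∧
      r = binEnt b0 - (w1 * binEnt α1 + w2 * binEnt α2) := by
    intro r hr
    obtain ⟨q, h0, h1, h2, h3, h4, h5⟩ := hr
    obtain ⟨w1, w2, α1, α2, a1, a2, a3, a4, a5, a6, a7, a8, a9⟩ :=
      RDC.converse_extract p₁ b0 hp0 hp q h0 h1 h2
    exact ⟨w1, w2, α1, α2, a1, a2, a3, a4, a5, a6, by rw [← a7]; exact h3,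
      by rw [← a8]; exact h4, by rw [h5, a9]⟩
  have hLB0 : ∀ r ∈ feas, 0 ≤ r := by
    intro r hr
    obtain ⟨w1, w2, α1, α2, b1, b2, b3, b4, b5, b6, b7, b8, b9⟩ := hext r hr
    have hS : w1 * binEnt α1 + w2 * binEnt α2 ≤ binEnt b0 := by
      calc w1 * binEnt α1 + w2 * binEnt α2 ≤ binEnt (w1*α1 + w2*α2) :=
            RDC.jensen2' b1 b2 b3 b4 b5
        _ = binEnt b0 := by rw [b6]
    rw [b9]; linarith
  have hbdd : BddBelow feas := ⟨0, fun r hr => hLB0 r hr⟩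
  refine ⟨?_, ?_, ?_⟩
  · -- case 1 : C₁ ≤ D and C₁ ≤ b
    intro hC₁D hC₁b
    rw [hbb] at hC₁b ⊢
    have hmem1 : (binEnt b0 - binEnt C₁) ∈ feas := by
      apply hmem C₁ hC₁0 hC₁b hC₁D
      rw [hkey, hinv_eq]
    apply le_antisymm (csInf_le hbdd hmem1)
    apply le_csInf ⟨_, hmem1⟩
    intro r hr
    obtain ⟨w1, w2, α1, α2, b1, b2, b3, b4, b5, b6, b7, b8, b9⟩ := hext r hr
    have hcon : w1 * binEnt (p₁+(1-2*p₁)*α1) + w2 * binEnt (p₁+(1-2*p₁)*α2)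
        ≤ binEnt (p₁+(1-2*p₁)*C₁) := by rw [hkey, hinv_eq]; exact b8
    have hS := RDC.c1_bound' hp0 hp b1 b2 b3 b4 b5 ⟨hC₁0, hC₁h⟩ hcon
    rw [b9]; linarith
  · -- case 2 : D < C₁ and D ≤ b
    intro hDC₁ hDb
    rw [hbb] at hDb ⊢
    have hD2 : D ≤ 1/2 := le_trans hDb hb0h
    have hmem2 : (binEnt b0 - binEnt D) ∈ feas := by
      apply hmem D hD0 hDb le_rfl
      have hle : p₁ + (1-2*p₁)*D ≤ hinvC := by
        rw [← hkey]
        nlinarith [mul_pos hp2 (sub_pos.2 hDC₁)]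
      have h0' : 0 ≤ p₁ + (1-2*p₁)*D := by nlinarith [mul_nonneg hp2.le hD0]
      calc binEnt (p₁ + (1-2*p₁)*D) ≤ binEnt hinvC := RDC.binEnt_mono h0' hle hinvh
        _ = C := hinv_eq
    apply le_antisymm (csInf_le hbdd hmem2)
    apply le_csInf ⟨_, hmem2⟩
    intro r hr
    obtain ⟨w1, w2, α1, α2, b1, b2, b3, b4, b5, b6, b7, b8, b9⟩ := hext r hr
    have he1 : (1-α1) ∈ Set.Icc (0:ℝ) 1 := ⟨by linarith [b4.2], by linarith [b4.1]⟩
    have hS : w1 * binEnt α1 + w2 * binEnt α2 ≤ binEnt D := by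
      have hj : w1 * binEnt (1-α1) + w2 * binEnt α2 ≤ binEnt (w1*(1-α1) + w2*α2) :=
        RDC.jensen2' b1 b2 b3 he1 b5
      rw [RDC.binEnt_one_sub] at hj
      have hd0' : 0 ≤ w1*(1-α1) + w2*α2 :=
        add_nonneg (mul_nonneg b1 (by linarith [b4.2])) (mul_nonneg b2 b5.1)
      calc w1 * binEnt α1 + w2 * binEnt α2 ≤ binEnt (w1*(1-α1) + w2*α2) := hj
        _ ≤ binEnt D := RDC.binEnt_mono hd0' b7 hD2
    rw [b9]; linarith
  · -- case 3 : b < min D C₁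
    intro hmin
    rw [hbb] at hmin
    have hbD : b0 ≤ D := le_of_lt (lt_of_lt_of_le hmin (min_le_left _ _))
    have hbC₁ : b0 < C₁ := lt_of_lt_of_le hmin (min_le_right _ _)
    have hmem3 : (binEnt b0 - binEnt b0) ∈ feas := by
      apply hmem b0 hb00 le_rfl hbD
      rw [hab0]
      have hah : a ≤ hinvC := by nlinarith [mul_pos hp2 (sub_pos.2 hbC₁)]
      calc binEnt a ≤ binEnt hinvC := RDC.binEnt_mono ha0 hah hinvh
        _ = C := hinv_eq
    rw [show binEnt b0 - binEnt b0 = 0 by ring] at hmem3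
    apply le_antisymm (csInf_le hbdd hmem3)
    exact le_csInf ⟨_, hmem3⟩ (fun r hr => hLB0 r hr)
end

section
/- Let S ~ Bern(a), S₁ ~ Bern(p₁) independent with a, p₁ ≤ 1/2, X = S ⊕ S₁, b = P(X=1) ≤ 1/2. For p_a ∈ [0,1] define g(p_a) = H(S|X̂) where the channel from X to X̂ (binary) has P(X̂=0|X=0) = p_a and P(X̂=0|X=1) = (1−b)(1−p_a)/b. Then g attains its maximum value H(a) at p_a = 1−b, is decreasing on [1−b, 1], and g(1) = H(p₁). Consequently, for every C with H(p₁) ≤ C ≤ H(a), there exists p_a ∈ [1−b, 1] with g(p_a) = C, and the resulting X̂ satisfies P(X̂=0) = P(X=0) (zero total variation between marginals). -/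
open Finset

lemma binEnt_eq (p : ℝ) : binEnt p = Real.binEntropy p / Real.log 2 := by
  unfold binEnt Real.binEntropy Real.logb
  rw [Real.log_inv, Real.log_inv]
  ring

@[fun_prop] lemma binEnt_continuous : Continuous binEnt := by
  rw [funext binEnt_eq]
  exact Real.binEntropy_continuous.div_const _

lemma hasDerivAt_binEnt {t : ℝ} (h0 : t ≠ 0) (h1 : t ≠ 1) :
    HasDerivAt binEnt ((Real.log (1 - t) - Real.log t) / Real.log 2) t := by
  have h := (Real.hasDerivAt_binEntropy h0 h1).div_const (Real.log 2)
  simpa [funext binEnt_eq] using h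

lemma condpart (c t : ℝ) (hc : c ≠ 0) :
    -(c * t * Real.logb 2 (c * t / (c * t + c * (1 - t)))) +
      -(c * (1 - t) * Real.logb 2 (c * (1 - t) / (c * t + c * (1 - t)))) = c * binEnt t := by
  have hs : c * t + c * (1 - t) = c := by ring
  rw [hs, mul_div_cancel_left₀ t hc, mul_div_cancel_left₀ (1 - t) hc, binEnt]
  ring

noncomputable def uF (p₁ pa : ℝ) : ℝ := (1 - p₁) - pa * (1 - 2 * p₁)
noncomputable def vF (a b p₁ pa : ℝ) : ℝ := (a - (1 - b) * uF p₁ pa) / b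
noncomputable def FF (a b p₁ pa : ℝ) : ℝ :=
  (1 - b) * binEnt (uF p₁ pa) + b * binEnt (vF a b p₁ pa)

lemma uF_hasDerivAt (p₁ pa : ℝ) : HasDerivAt (fun x => uF p₁ x) (-(1 - 2 * p₁)) pa := by
  have h := ((hasDerivAt_id pa).mul_const (1 - 2 * p₁)).const_sub (1 - p₁)
  simpa [uF] using h

lemma vF_hasDerivAt (a b p₁ pa : ℝ) :
    HasDerivAt (fun x => vF a b p₁ x) ((1 - b) * (1 - 2 * p₁) / b) pa := by
  have h := (((uF_hasDerivAt p₁ pa).const_mul (1 - b)).const_sub a).div_const b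
  have he : (1 - b) * (1 - 2 * p₁) / b = -((1 - b) * -(1 - 2 * p₁)) / b := by ring
  rw [he]
  exact h

@[fun_prop] lemma FF_cont (a b p₁ : ℝ) : Continuous (fun pa => FF a b p₁ pa) := by
  unfold FF vF uF
  fun_prop

set_option maxHeartbeats 2000000 in
/-- with the binary symmetric source (`S ~ Bern(a)`, `S₁ ~ Bern(p₁)`,
`X ~ Bern(b)`, `S = X ⊕ S₁`, `b = P(X=1) = (a-p₁)/(1-2p₁) ≤ 1/2`), consider the channel
`P(X̂=0|X=0) = pa`, `P(X̂=0|X=1) = (1-b)(1-pa)/b` and let `g pa = H(S|X̂)`.  Then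
`g (1-b) = H(a)`, `g` is decreasing on `[1-b, 1]`, `g 1 = H(p₁)`; consequently for every
`C ∈ [H(p₁), H(a)]` there is `pa ∈ [1-b, 1]` with `g pa = C`, and the marginal of `X̂`
always matches that of `X` (`P(X̂=0) = P(X=0) = 1-b`, zero total variation). -/
theorem stmt15 (a p₁ b : ℝ)
    (ha0 : 0 ≤ a) (ha : a ≤ 1 / 2) (hp0 : 0 ≤ p₁) (hp : p₁ < 1 / 2) (hpa : p₁ ≤ a)
    (hb : b = (a - p₁) / (1 - 2 * p₁)) (hb0 : 0 < b) (hb2 : b ≤ 1 / 2) :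
    -- channel from X to X̂
    let W : ℝ → Bool → Bool → ℝ := fun pa x xh =>
      if xh then (if x then 1 - (1 - b) * (1 - pa) / b else 1 - pa)
      else (if x then (1 - b) * (1 - pa) / b else pa)
    -- joint pmf of (S, X, X̂); the joint of (S, X) is `bern b x * bern p₁ (s ⊕ x)`
    let joint : ℝ → Bool → Bool → Bool → ℝ := fun pa s x xh =>
      bern b x * bern p₁ (Bool.xor s x) * W pa x xh
    let g : ℝ → ℝ := fun pa =>
      condEnt2 (fun s xh => ∑ x : Bool, joint pa s x xh)
    g (1 - b) = binEnt a ∧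
    AntitoneOn g (Set.Icc (1 - b) 1) ∧
    g 1 = binEnt p₁ ∧
    (∀ C : ℝ, binEnt p₁ ≤ C → C ≤ binEnt a →
      ∃ pa ∈ Set.Icc (1 - b) 1, g pa = C) ∧
    (∀ pa : ℝ, (∑ s : Bool, ∑ x : Bool, joint pa s x false) = 1 - b) := by
  intro W joint g
  have h2p : (0:ℝ) < 1 - 2 * p₁ := by linarith
  have hbne : b ≠ 0 := ne_of_gt hb0
  have hb1 : (0:ℝ) < 1 - b := by linarith
  have hb1ne : (1:ℝ) - b ≠ 0 := ne_of_gt hb1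
  have hab : a = p₁ + b * (1 - 2 * p₁) := by
    rw [hb, div_mul_cancel₀ _ h2p.ne']
    ring
  -- marginal computations
  have hm_tf : ∀ pa : ℝ, joint pa true true false + joint pa true false false = (1 - b) * uF p₁ pa := by
    intro pa
    simp only [joint, W, bern, Fintype.sum_bool, Bool.xor_false, Bool.xor_true, Bool.not_true,
      Bool.not_false, Bool.false_eq_true, if_true, if_false, uF]
    field_simp
    ring
  have hm_ff : ∀ pa : ℝ, joint pa false true false + joint pa false false false = (1 - b) * (1 - uF p₁ pa) := by
    intro pa
    simp only [joint, W, bern, Fintype.sum_bool, Bool.xor_false, Bool.xor_true, Bool.not_true,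
      Bool.not_false, Bool.false_eq_true, if_true, if_false, uF]
    field_simp
    ring
  have hm_tt : ∀ pa : ℝ, joint pa true true true + joint pa true false true = b * vF a b p₁ pa := by
    intro pa
    simp only [joint, W, bern, Fintype.sum_bool, Bool.xor_false, Bool.xor_true, Bool.not_true,
      Bool.not_false, Bool.false_eq_true, if_true, if_false, vF, uF, hab]
    field_simp
    ring
  have hm_ft : ∀ pa : ℝ, joint pa false true true + joint pa false false true = b * (1 - vF a b p₁ pa) := by
    intro pa
    simp only [joint, W, bern, Fintype.sum_bool, Bool.xor_false, Bool.xor_true, Bool.not_true,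
      Bool.not_false, Bool.false_eq_true, if_true, if_false, vF, uF, hab]
    field_simp
    ring
  -- key formula
  have key : ∀ pa : ℝ, g pa = FF a b p₁ pa := by
    intro pa
    simp only [g, condEnt2, Fintype.sum_bool]
    rw [hm_tt pa, hm_ft pa, hm_tf pa, hm_ff pa,
      condpart b (vF a b p₁ pa) hbne, condpart (1 - b) (uF p₁ pa) hb1ne, FF]
    ring
  -- endpoint values
  have hu1b : uF p₁ (1 - b) = a := by rw [uF, hab]; ring
  have hv1b : vF a b p₁ (1 - b) = a := by
    rw [vF, hu1b]
    field_simp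
    ring
  have hF1b : FF a b p₁ (1 - b) = binEnt a := by
    rw [FF, hu1b, hv1b]; ring
  have hu1 : uF p₁ 1 = p₁ := by rw [uF]; ring
  have hv1 : vF a b p₁ 1 = 1 - p₁ := by
    rw [vF, hu1, hab]
    field_simp
    ring
  have hsym : binEnt (1 - p₁) = binEnt p₁ := by
    rw [binEnt_eq, binEnt_eq, Real.binEntropy_one_sub]
  have hF1 : FF a b p₁ 1 = binEnt p₁ := by
    rw [FF, hu1, hv1, hsym]; ring
  -- derivative and antitonicity
  have hFanti : AntitoneOn (fun pa => FF a b p₁ pa) (Set.Icc (1 - b) 1) := by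
    have hder : ∀ x ∈ Set.Ioo (1 - b) 1,
        HasDerivAt (fun pa => FF a b p₁ pa)
          ((1 - b) * ((Real.log (1 - uF p₁ x) - Real.log (uF p₁ x)) / Real.log 2 * -(1 - 2 * p₁))
            + b * ((Real.log (1 - vF a b p₁ x) - Real.log (vF a b p₁ x)) / Real.log 2
                * ((1 - b) * (1 - 2 * p₁) / b))) x := by
      intro x hx
      have h1 : p₁ < uF p₁ x := by
        simp only [uF]; nlinarith [mul_pos h2p (sub_pos.mpr hx.2)]
      have h2 : uF p₁ x < a := by
        simp only [uF]; nlinarith [mul_pos h2p (sub_pos.mpr hx.1)]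
      have h3 : a < vF a b p₁ x := by
        rw [vF, lt_div_iff₀ hb0]; nlinarith [mul_pos hb1 (sub_pos.mpr h2)]
      have h4 : vF a b p₁ x < 1 := by
        rw [vF, div_lt_one hb0]
        nlinarith [mul_pos hb1 (sub_pos.mpr h1), mul_nonneg hb0.le hp0]
      have hu0 : uF p₁ x ≠ 0 := by linarith
      have hu1' : uF p₁ x ≠ 1 := by linarith
      have hv0 : vF a b p₁ x ≠ 0 := by linarith
      have hv1' : vF a b p₁ x ≠ 1 := ne_of_lt h4
      have hU := (hasDerivAt_binEnt hu0 hu1').comp x (uF_hasDerivAt p₁ x)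
      have hV := (hasDerivAt_binEnt hv0 hv1').comp x (vF_hasDerivAt a b p₁ x)
      have hsum := (hU.const_mul (1 - b)).add (hV.const_mul b)
      exact hsum
    apply antitoneOn_of_deriv_nonpos (convex_Icc _ _)
      ((FF_cont a b p₁).continuousOn)
    · rw [interior_Icc]
      intro x hx
      exact ((hder x hx).differentiableAt).differentiableWithinAt
    · rw [interior_Icc]
      intro x hx
      rw [(hder x hx).deriv]
      have h1 : p₁ < uF p₁ x := by
        simp only [uF]; nlinarith [mul_pos h2p (sub_pos.mpr hx.2)]
      have h2 : uF p₁ x < a := by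
        simp only [uF]; nlinarith [mul_pos h2p (sub_pos.mpr hx.1)]
      have h3 : a < vF a b p₁ x := by
        rw [vF, lt_div_iff₀ hb0]; nlinarith [mul_pos hb1 (sub_pos.mpr h2)]
      have h4 : vF a b p₁ x < 1 := by
        rw [vF, div_lt_one hb0]
        nlinarith [mul_pos hb1 (sub_pos.mpr h1), mul_nonneg hb0.le hp0]
      set u := uF p₁ x
      set v := vF a b p₁ x
      have hD : (1 - b) * ((Real.log (1 - u) - Real.log u) / Real.log 2 * -(1 - 2 * p₁))
            + b * ((Real.log (1 - v) - Real.log v) / Real.log 2 * ((1 - b) * (1 - 2 * p₁) / b))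
          = ((1 - b) * (1 - 2 * p₁) / Real.log 2)
            * ((Real.log (1 - v) - Real.log v) - (Real.log (1 - u) - Real.log u)) := by
        field_simp
        ring
      rw [hD]
      have hpref : 0 ≤ (1 - b) * (1 - 2 * p₁) / Real.log 2 :=
        div_nonneg (by nlinarith) (Real.log_pos (by norm_num)).le
      have hlogA : Real.log (1 - v) ≤ Real.log (1 - u) :=
        Real.log_le_log (by linarith) (by linarith)
      have hlogB : Real.log u ≤ Real.log v :=
        Real.log_le_log (by linarith) (by linarith)
      exact mul_nonpos_of_nonneg_of_nonpos hpref (by linarith)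
  -- conclude
  refine ⟨?_, ?_, ?_, ?_, ?_⟩
  · rw [key, hF1b]
  · intro x hx y hy hxy
    rw [key x, key y]
    exact hFanti hx hy hxy
  · rw [key, hF1]
  · intro C hC1 hC2
    have hsub := intermediate_value_Icc' (by linarith : 1 - b ≤ 1)
      ((FF_cont a b p₁).continuousOn (s := Set.Icc (1 - b) 1))
    have hmemC : C ∈ Set.Icc (FF a b p₁ 1) (FF a b p₁ (1 - b)) := by
      rw [hF1, hF1b]; exact ⟨hC1, hC2⟩
    obtain ⟨pa, hmem, hpa⟩ := hsub hmemC
    exact ⟨pa, hmem, (key pa).trans hpa⟩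
  · intro pa
    simp only [joint, W, bern, Fintype.sum_bool, Bool.xor_false, Bool.xor_true, Bool.not_true,
      Bool.not_false, Bool.false_eq_true, if_true, if_false]
    field_simp
    ring
end
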